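/- arXiv:1703.04969 — 2 statements merged into one kernel-verified Lean document; each statement's English description precedes it below -/
import Mathlib

section
/- (Quaternionic determinant formula for the second weighted zeta function) Let G be a finite connected graph with n vertices, m₀ non-loop edges, m₁ loops (at most one loop per vertex), and m' = 2m₀ + m₁ arcs. Let a, b: D(G) → ℍ, and define K, L, J₀, W̃, D̃ as above. Then for any complex variable t: det(I_{2m'} − t·ψ(K L* − J₀)) = (1−t²)^{2m₀−2n}·(1+t)^{2m₁}·det(I_{2n} − t·ψ(W̃) + t²·(ψ(D̃) − I_{2n})). -/
open Quaternion Matrix Finset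

noncomputable section

/-- Simplex part of a quaternion: `x = S(x) + j·P(x)`. -/
def qS (x : Quaternion ℝ) : ℂ := ⟨x.re, x.imI⟩

/-- Perplex part of a quaternion. -/
def qP (x : Quaternion ℝ) : ℂ := ⟨x.imJ, -x.imK⟩

/-- Embedding of `ℂ` into the quaternions (span of `1, i`). -/
def cq (z : ℂ) : Quaternion ℝ := ⟨z.re, z.im, 0, 0⟩

/-- The quaternion unit `j`. -/
def jq : Quaternion ℝ := ⟨0, 0, 1, 0⟩

/-- The standard complex representation of a quaternionic matrix `M = A + jB`,
`ψ(M) = [[A, -conj B],[B, conj A]]`. -/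
def psi {m n : Type*} (M : Matrix m n (Quaternion ℝ)) :
    Matrix (m ⊕ m) (n ⊕ n) ℂ :=
  Matrix.fromBlocks (M.map qS) (-(M.map fun x => star (qP x)))
    (M.map qP) (M.map fun x => star (qS x))

variable {V : Type*}

/-- Arc-by-vertex matrix `K` with `K_{ev} = a(e)` if `o(e) = v`. Arcs are the
elements of a symmetric finite set `E` of ordered pairs of vertices. -/
def Karc [DecidableEq V] (E : Finset (V × V)) (a : V × V → Quaternion ℝ) :
    Matrix ↥E V (Quaternion ℝ) :=
  Matrix.of fun e v => if e.1.1 = v then a e.1 else 0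

/-- Arc-by-vertex matrix `L` with `L_{ev} = b(e)` if `t(e) = v`. -/
def Larc [DecidableEq V] (E : Finset (V × V)) (b : V × V → Quaternion ℝ) :
    Matrix ↥E V (Quaternion ℝ) :=
  Matrix.of fun e v => if e.1.2 = v then b e.1 else 0

/-- The arc-inversion matrix `J₀` with `(J₀)_{ef} = 1` iff `f = e⁻¹`. -/
def J0 [DecidableEq V] (E : Finset (V × V)) : Matrix ↥E ↥E (Quaternion ℝ) :=
  Matrix.of fun e f => if f.1 = Prod.swap e.1 then 1 else 0

/-- Transition matrix of the quaternionic Szegedy walk. -/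
def SzeU [DecidableEq V] (E : Finset (V × V)) (q : V × V → Quaternion ℝ) :
    Matrix ↥E ↥E (Quaternion ℝ) :=
  Matrix.of fun e f =>
    if f.1 = Prod.swap e.1 then 2 * (q e.1 * star (q e.1)) - 1
    else if f.1.2 = e.1.1 then 2 * (q e.1 * star (q (Prod.swap f.1))) else 0

/-- The doubly weighted matrix `W̃` for general arc weights `a, b`. -/
def Wt [DecidableEq V] (E : Finset (V × V)) (a b : V × V → Quaternion ℝ) :
    Matrix V V (Quaternion ℝ) :=
  Matrix.of fun u v => if (v, u) ∈ E then star (b (v, u)) * a (v, u) else 0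

/-- The diagonal matrix `D̃` with `D̃_{uu} = Σ_{o(e)=u} b(e⁻¹)* a(e)`. -/
def Dt [DecidableEq V] (E : Finset (V × V)) (a b : V × V → Quaternion ℝ) :
    Matrix V V (Quaternion ℝ) :=
  Matrix.of fun u v =>
    if u = v then ∑ e ∈ E.filter (fun p => p.1 = u), star (b (Prod.swap e)) * a e else 0

/-- The doubly weighted matrix of the quaternionic Szegedy walk. -/
def Wtil [DecidableEq V] (E : Finset (V × V)) (q : V × V → Quaternion ℝ) :
    Matrix V V (Quaternion ℝ) :=
  Matrix.of fun u v => if (v, u) ∈ E then 2 * (star (q (u, v)) * q (v, u)) else 0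

/-- The number of loops of the graph. -/
def nLoops [DecidableEq V] (E : Finset (V × V)) : ℕ :=
  (E.filter fun p => p.1 = p.2).card

/-! ### Auxiliary lemmas -/

section QuatParts

lemma qS_zero : qS 0 = 0 := by simp [qS, Complex.ext_iff]
lemma qP_zero : qP 0 = 0 := by simp [qP, Complex.ext_iff]
lemma qS_one : qS 1 = 1 := by simp [qS, Complex.ext_iff]
lemma qP_one : qP 1 = 0 := by simp [qP, Complex.ext_iff]
lemma qS_add (x y : Quaternion ℝ) : qS (x + y) = qS x + qS y := by
  simp [qS, Complex.ext_iff]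
lemma qP_add (x y : Quaternion ℝ) : qP (x + y) = qP x + qP y := by
  simp [qP, Complex.ext_iff]; ring
lemma qS_sub (x y : Quaternion ℝ) : qS (x - y) = qS x - qS y := by
  simp [qS, Complex.ext_iff]
lemma qP_sub (x y : Quaternion ℝ) : qP (x - y) = qP x - qP y := by
  simp [qP, Complex.ext_iff]; ring
lemma qS_star (x : Quaternion ℝ) : qS (star x) = star (qS x) := by
  simp [qS, Complex.ext_iff, Complex.star_def]
lemma qP_star (x : Quaternion ℝ) : qP (star x) = - qP x := by
  simp [qP, Complex.ext_iff]
lemma qS_mul (x y : Quaternion ℝ) :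
    qS (x * y) = qS x * qS y - star (qP x) * qP y := by
  simp [qS, qP, Complex.ext_iff, Complex.star_def]; constructor <;> ring
lemma qP_mul (x y : Quaternion ℝ) :
    qP (x * y) = star (qS x) * qP y + qP x * qS y := by
  simp [qS, qP, Complex.ext_iff, Complex.star_def]; constructor <;> ring

def qSh : Quaternion ℝ →+ ℂ := AddMonoidHom.mk' qS qS_add
def qPh : Quaternion ℝ →+ ℂ := AddMonoidHom.mk' qP qP_add

lemma qS_sum {ι : Type*} (s : Finset ι) (f : ι → Quaternion ℝ) :
    qS (∑ i ∈ s, f i) = ∑ i ∈ s, qS (f i) := map_sum qSh f s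
lemma qP_sum {ι : Type*} (s : Finset ι) (f : ι → Quaternion ℝ) :
    qP (∑ i ∈ s, f i) = ∑ i ∈ s, qP (f i) := map_sum qPh f s

end QuatParts

section PsiLemmas

lemma psi_one {m : Type*} [DecidableEq m] : psi (1 : Matrix m m (Quaternion ℝ)) = 1 := by
  ext (i|i) (j|j) <;>
    simp [psi, Matrix.map_apply, Matrix.one_apply, apply_ite qS, apply_ite qP,
      apply_ite (star : ℂ → ℂ), qS_one, qS_zero, qP_one, qP_zero]

lemma psi_sub {m n : Type*} (M N : Matrix m n (Quaternion ℝ)) :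
    psi (M - N) = psi M - psi N := by
  ext (i|i) (j|j) <;>
    (simp [psi, Matrix.map_apply, qS_sub, qP_sub, star_sub]; try ring)

lemma psi_mul {m n p : Type*} [Fintype n] (M : Matrix m n (Quaternion ℝ))
    (N : Matrix n p (Quaternion ℝ)) : psi (M * N) = psi M * psi N := by
  show _ = Matrix.fromBlocks _ _ _ _ * Matrix.fromBlocks _ _ _ _
  rw [Matrix.fromBlocks_multiply]
  unfold psi
  ext (i|i) (j|j) <;>
  · simp only [Matrix.fromBlocks_apply₁₁, Matrix.fromBlocks_apply₁₂,
      Matrix.fromBlocks_apply₂₁, Matrix.fromBlocks_apply₂₂,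
      Matrix.map_apply, Matrix.mul_apply, Matrix.add_apply, Matrix.neg_apply,
      qS_sum, qP_sum, qS_mul, qP_mul, star_add, star_mul', star_sub, star_star, star_sum,
      ← Finset.sum_neg_distrib, ← Finset.sum_add_distrib, ← Finset.sum_sub_distrib]
    exact Finset.sum_congr rfl fun k _ => by ring

lemma psi_conjT {m n : Type*} (M : Matrix m n (Quaternion ℝ)) :
    psi Mᴴ = (psi M)ᴴ := by
  ext (i|i) (j|j) <;>
    simp [psi, Matrix.map_apply, Matrix.conjTranspose_apply, qS_star, qP_star]

end PsiLemmas

section ArcIdentities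

variable {V : Type*} [Fintype V] [DecidableEq V] (E : Finset (V × V))
  (a b : V × V → Quaternion ℝ)

lemma sumE {β : Type*} [AddCommMonoid β] (c : V × V) (X : V × V → β) :
    (∑ g : ↥E, if (g : V × V) = c then X g else 0) = if c ∈ E then X c else 0 := by
  calc (∑ g : ↥E, if (g : V × V) = c then X g else 0)
      = ∑ p ∈ E, (if p = c then X p else 0) :=
        Finset.sum_coe_sort E (fun p => if p = c then X p else 0)
    _ = _ := Finset.sum_ite_eq' E c fun p => X p

lemma LK_eq_Wt : (Larc E b)ᴴ * Karc E a = Wt E a b := by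
  refine Matrix.ext fun u v => ?_
  simp only [Matrix.mul_apply, Matrix.conjTranspose_apply, Larc, Karc, Wt, Matrix.of_apply]
  calc (∑ e : ↥E, star (if (e : V × V).2 = u then b e else 0) *
          (if (e : V × V).1 = v then a e else 0))
      = ∑ e : ↥E, (if (e : V × V) = (v, u) then star (b (e : V × V)) * a (e : V × V) else 0) :=
        Finset.sum_congr rfl fun e _ => by
          rcases e with ⟨⟨x, y⟩, he⟩
          by_cases h1 : y = u <;> by_cases h2 : x = v <;>
            simp [h1, h2, Prod.ext_iff] <;> tauto
    _ = _ := sumE E (v, u) (fun p => star (b p) * a p)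

lemma J0_mul_J0 (hsym : ∀ p ∈ E, Prod.swap p ∈ E) : J0 E * J0 E = 1 := by
  refine Matrix.ext fun e f => ?_
  simp only [Matrix.mul_apply, J0, Matrix.of_apply, Matrix.one_apply]
  calc (∑ g : ↥E, (if (g : V × V) = Prod.swap e.1 then (1 : Quaternion ℝ) else 0) *
          (if (f : V × V) = Prod.swap (g : V × V) then 1 else 0))
      = ∑ g : ↥E, (if (g : V × V) = Prod.swap e.1 then
          (if (f : V × V) = Prod.swap (Prod.swap (e : V × V)) then (1 : Quaternion ℝ) else 0)
          else 0) :=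
        Finset.sum_congr rfl fun g _ => by
          by_cases h1 : (g : V × V) = Prod.swap e.1 <;> simp [h1]
    _ = _ := by
        rw [sumE E (Prod.swap e.1)
          (fun _ => if (f : V × V) = Prod.swap (Prod.swap (e : V × V)) then (1 : Quaternion ℝ)
            else 0)]
        rw [if_pos (hsym e.1 e.2)]
        simp only [Prod.swap_swap]
        by_cases h : (e : V × V) = (f : V × V)
        · rw [if_pos h.symm, if_pos (Subtype.ext h)]
        · rw [if_neg (fun hh => h hh.symm), if_neg (fun hh => h (congrArg _ hh))]

lemma J0_mul_Karc (hsym : ∀ p ∈ E, Prod.swap p ∈ E) (e : ↥E) (v : V) :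
    (J0 E * Karc E a) e v = if (e : V × V).2 = v then a (Prod.swap (e : V × V)) else 0 := by
  simp only [Matrix.mul_apply, J0, Karc, Matrix.of_apply]
  calc (∑ g : ↥E, (if (g : V × V) = Prod.swap (e : V × V) then (1 : Quaternion ℝ) else 0) *
          (if (g : V × V).1 = v then a (g : V × V) else 0))
      = ∑ g : ↥E, (if (g : V × V) = Prod.swap (e : V × V) then
          (if (e : V × V).2 = v then a (Prod.swap (e : V × V)) else 0) else 0) :=
        Finset.sum_congr rfl fun g _ => by
          by_cases h1 : (g : V × V) = Prod.swap (e : V × V) <;> simp [h1]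
    _ = _ := by
        rw [sumE E (Prod.swap (e : V × V))
          (fun _ => if (e : V × V).2 = v then a (Prod.swap (e : V × V)) else 0),
          if_pos (hsym e.1 e.2)]

lemma LJK_eq_Dt (hsym : ∀ p ∈ E, Prod.swap p ∈ E) :
    (Larc E b)ᴴ * (J0 E * Karc E a) = Dt E a b := by
  refine Matrix.ext fun u v => ?_
  simp only [Matrix.mul_apply, Matrix.conjTranspose_apply, Larc, Matrix.of_apply,
    J0_mul_Karc E a hsym, Dt]
  by_cases huv : u = v
  · subst huv
    rw [if_pos rfl]
    calc (∑ e : ↥E, star (if (e : V × V).2 = u then b (e : V × V) else 0) *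
            (if (e : V × V).2 = u then a (Prod.swap (e : V × V)) else 0))
        = ∑ p ∈ E, (if p.2 = u then star (b p) * a (Prod.swap p) else 0) := by
          rw [← Finset.sum_coe_sort E
            (fun p => if p.2 = u then star (b p) * a (Prod.swap p) else 0)]
          exact Finset.sum_congr rfl fun e _ => by
            by_cases h1 : (e : V × V).2 = u <;> simp [h1]
      _ = ∑ p ∈ E.filter (fun p => p.2 = u), star (b p) * a (Prod.swap p) :=
          (Finset.sum_filter _ _).symm
      _ = ∑ p ∈ E.filter (fun p => p.1 = u), star (b (Prod.swap p)) * a p := by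
          refine Finset.sum_bij' (fun p _ => Prod.swap p) (fun p _ => Prod.swap p)
            ?_ ?_ ?_ ?_ ?_
          · intro p hp
            simp only [Finset.mem_filter] at hp ⊢
            exact ⟨hsym p hp.1, hp.2⟩
          · intro p hp
            simp only [Finset.mem_filter] at hp ⊢
            exact ⟨hsym p hp.1, hp.2⟩
          · intro p _; exact Prod.swap_swap p
          · intro p _; exact Prod.swap_swap p
          · intro p _; rw [Prod.swap_swap]
  · rw [if_neg huv]
    refine Finset.sum_eq_zero fun e _ => ?_
    by_cases h1 : (e : V × V).2 = u
    · by_cases h2 : (e : V × V).2 = v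
      · exact absurd (h1.symm.trans h2) huv
      · simp [h2]
    · simp [h1]

end ArcIdentities
section DetJ

variable {V : Type*} [Fintype V] [DecidableEq V] (E : Finset (V × V)) (t : ℂ)

/-- Complex version of the arc-inversion matrix. -/
def Jc (E : Finset (V × V)) [DecidableEq V] : Matrix ↥E ↥E ℂ :=
  Matrix.of fun e f => if (f : V×V) = Prod.swap (e : V×V) then 1 else 0

def Bt (E : Finset (V × V)) (t : ℂ) [DecidableEq V] : Matrix ↥E ↥E ℂ := Matrix.of fun e f =>
  if (f : V×V) = Prod.swap (e : V×V) ∧ ¬ (e : V×V).1 = (e : V×V).2 then t else 0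

def dA (E : Finset (V × V)) (t : ℂ) [DecidableEq V] : ↥E → ℂ := fun e =>
  if (e : V×V).1 = (e : V×V).2 then 1 + t else 1

lemma factor1 : 1 + t • Jc E = Matrix.diagonal (dA E t) * (1 + Bt E t) := by
  refine Matrix.ext fun e f => ?_
  rw [Matrix.diagonal_mul]
  simp only [Matrix.add_apply, Matrix.smul_apply, Matrix.one_apply, Jc, Bt, dA, Matrix.of_apply,
    smul_eq_mul]
  by_cases hl : (e : V×V).1 = (e : V×V).2
  · have hswap : (e : V×V) = Prod.swap (e : V×V) := by
      rw [Prod.ext_iff, Prod.fst_swap, Prod.snd_swap]; exact ⟨hl, hl.symm⟩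
    by_cases hef : e = f
    · subst hef
      rw [if_pos rfl, if_pos hswap, if_pos hl, if_neg (fun h => h.2 hl)]; ring
    · have h2 : ¬ (f : V×V) = Prod.swap (e : V×V) := fun h =>
        hef (Subtype.ext (hswap.trans h.symm))
      rw [if_neg hef, if_neg h2, if_pos hl, if_neg (fun h => h2 h.1)]; ring
  · by_cases hef : e = f
    · subst hef
      have h2 : ¬ (e : V×V) = Prod.swap (e : V×V) := by
        rw [Prod.ext_iff]; rintro ⟨h1, -⟩; exact hl h1
      rw [if_pos rfl, if_neg h2, if_neg hl, if_neg (fun h => h2 h.1)]; ring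
    · rw [if_neg hef, if_neg hl]
      by_cases hc : (f : V×V) = Prod.swap (e : V×V)
      · rw [if_pos hc, if_pos ⟨hc, hl⟩]; ring
      · rw [if_neg hc, if_neg (fun h => hc h.1)]; ring

lemma BtBt (hsym : ∀ p ∈ E, Prod.swap p ∈ E) : Bt E t * Bt E t =
    Matrix.diagonal (fun e : ↥E => if (e : V×V).1 = (e : V×V).2 then 0 else t^2) := by
  refine Matrix.ext fun e f => ?_
  simp only [Matrix.mul_apply, Bt, Matrix.of_apply]
  calc (∑ g : ↥E, (if (g : V×V) = Prod.swap (e : V×V) ∧ ¬ (e : V×V).1 = (e : V×V).2 then t else 0)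
          * (if (f : V×V) = Prod.swap (g : V×V) ∧ ¬ (g : V×V).1 = (g : V×V).2 then t else 0))
      = ∑ g : ↥E, (if (g : V×V) = Prod.swap (e : V×V) then
          (if ¬ (e : V×V).1 = (e : V×V).2 ∧ (f : V×V) = (e : V×V) then t * t else 0) else 0) := by
        refine Finset.sum_congr rfl fun g _ => ?_
        by_cases h1 : (g : V×V) = Prod.swap (e : V×V)
        · have hg2 : Prod.swap (g : V×V) = (e : V×V) := by rw [h1, Prod.swap_swap]
          have hloop : ((g : V×V).1 = (g : V×V).2) ↔ ((e : V×V).1 = (e : V×V).2) := by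
            rw [h1, Prod.fst_swap, Prod.snd_swap, eq_comm]
          rw [if_pos h1]
          by_cases h2 : (e : V×V).1 = (e : V×V).2
          · rw [if_neg (fun h => h.2 h2), if_neg (fun h => h.2 (hloop.mpr h2)),
              if_neg (fun h => h.1 h2)]
            simp
          · by_cases h4 : (f : V×V) = (e : V×V)
            · rw [if_pos ⟨h1, h2⟩, if_pos ⟨h4.trans hg2.symm, fun h => h2 (hloop.mp h)⟩,
                if_pos ⟨h2, h4⟩]
            · rw [if_pos ⟨h1, h2⟩, if_neg (fun h => h4 (h.1.trans hg2)),
                if_neg (fun h => h4 h.2)]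
              simp
        · rw [if_neg h1, if_neg (fun h : _ ∧ _ => h1 h.1), zero_mul]
    _ = _ := by
        rw [sumE E (Prod.swap (e : V×V))
          (fun _ => if ¬ (e : V×V).1 = (e : V×V).2 ∧ (f : V×V) = (e : V×V) then t * t else 0),
          if_pos (hsym e.1 e.2), Matrix.diagonal_apply]
        by_cases hef : e = f
        · subst hef
          by_cases h2 : (e : V×V).1 = (e : V×V).2 <;> simp [h2, sq]
        · have h3 : ¬ (f : V×V) = (e : V×V) := fun h => hef (Subtype.ext h.symm)
          simp [hef, h3]

def eps (E : Finset (V × V)) [Fintype V] [DecidableEq V] : ↥E → ℂ := fun e =>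
  if Fintype.equivFin V (e : V×V).1 < Fintype.equivFin V (e : V×V).2 then 1 else -1

lemma eps_sq (e : ↥E) : eps E e * eps E e = 1 := by
  unfold eps; split <;> norm_num

lemma eps_swap (e f : ↥E) (hf : (f : V×V) = Prod.swap (e : V×V))
    (hl : ¬ (e : V×V).1 = (e : V×V).2) : eps E e * eps E f = -1 := by
  unfold eps
  have hne : Fintype.equivFin V (e : V×V).1 ≠ Fintype.equivFin V (e : V×V).2 :=
    fun h => hl ((Fintype.equivFin V).injective h)
  rw [hf, Prod.fst_swap, Prod.snd_swap]
  rcases lt_or_gt_of_ne hne with h | h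
  · rw [if_pos h, if_neg (not_lt_of_gt h)]; ring
  · rw [if_neg (not_lt_of_gt h), if_pos h]; ring

lemma conjBt : Matrix.diagonal (eps E) * (1 + Bt E t) * Matrix.diagonal (eps E)
    = 1 - Bt E t := by
  refine Matrix.ext fun e f => ?_
  rw [Matrix.mul_diagonal, Matrix.diagonal_mul]
  simp only [Matrix.add_apply, Matrix.sub_apply, Matrix.one_apply, Bt, Matrix.of_apply]
  by_cases hef : e = f
  · subst hef
    have h2 : ¬ ((e : V×V) = Prod.swap (e : V×V) ∧ ¬ (e : V×V).1 = (e : V×V).2) := by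
      rintro ⟨h1, h2⟩
      exact h2 (by rw [Prod.ext_iff] at h1; exact h1.1)
    rw [if_pos rfl, if_neg h2]
    have := eps_sq E e
    ring_nf
    ring_nf at this
    linear_combination this
  · rw [if_neg hef]
    by_cases hc : (f : V×V) = Prod.swap (e : V×V) ∧ ¬ (e : V×V).1 = (e : V×V).2
    · rw [if_pos hc]
      have := eps_swap E e f hc.1 hc.2
      ring_nf
      ring_nf at this
      linear_combination t * this
    · rw [if_neg hc]; ring

lemma det_one_add_Bt_sq (hsym : ∀ p ∈ E, Prod.swap p ∈ E) :
    (1 + Bt E t).det * (1 + Bt E t).det = (1 - t^2) ^ (E.card - nLoops E) := by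
  have h1 : (1 + Bt E t).det = (1 - Bt E t).det := by
    have hd : (Matrix.diagonal (eps E) * Matrix.diagonal (eps E)).det = 1 := by
      rw [Matrix.diagonal_mul_diagonal]
      simp [Matrix.det_diagonal, eps_sq]
    have hconj := congrArg Matrix.det (conjBt E t)
    rw [Matrix.det_mul, Matrix.det_mul] at hconj
    rw [Matrix.det_mul] at hd
    linear_combination hconj - (1 + Bt E t).det * hd
  nth_rewrite 2 [h1]
  rw [← Matrix.det_mul]
  have hexp : (1 + Bt E t) * (1 - Bt E t) = 1 - Bt E t * Bt E t := by noncomm_ring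
  rw [hexp, BtBt E t hsym]
  have : (1 : Matrix ↥E ↥E ℂ) - Matrix.diagonal (fun e : ↥E =>
      if (e : V×V).1 = (e : V×V).2 then 0 else t^2) =
      Matrix.diagonal (fun e : ↥E => if (e : V×V).1 = (e : V×V).2 then 1 else 1 - t^2) := by
    refine Matrix.ext fun e f => ?_
    by_cases hef : e = f
    · subst hef
      simp only [Matrix.sub_apply, Matrix.one_apply_eq, Matrix.diagonal_apply_eq]
      split <;> ring
    · simp [Matrix.diagonal_apply_ne _ hef, Matrix.one_apply_ne hef, hef]
  rw [this, Matrix.det_diagonal]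
  calc (∏ e : ↥E, if (e : V×V).1 = (e : V×V).2 then 1 else 1 - t^2)
      = ∏ p ∈ E, (if p.1 = p.2 then 1 else 1 - t^2) :=
        Finset.prod_coe_sort E (fun p => if p.1 = p.2 then 1 else 1 - t^2)
    _ = (1 - t^2) ^ (E.card - nLoops E) := by
        rw [Finset.prod_ite, Finset.prod_const, Finset.prod_const, one_pow, one_mul]
        congr 1
        have := Finset.card_filter_add_card_filter_not (s := E)
          (p := fun p : V × V => p.1 = p.2)
        unfold nLoops
        omega

lemma det_dA : (Matrix.diagonal (dA E t)).det = (1 + t) ^ nLoops E := by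
  rw [Matrix.det_diagonal]
  calc (∏ e : ↥E, dA E t e)
      = ∏ p ∈ E, (if p.1 = p.2 then 1 + t else 1) :=
        Finset.prod_coe_sort E (fun p => if p.1 = p.2 then 1 + t else 1)
    _ = _ := by
        rw [Finset.prod_ite, Finset.prod_const, Finset.prod_const, one_pow, mul_one]
        rfl

lemma psi_J0_blocks : psi (J0 E) = Matrix.fromBlocks (Jc E) 0 0 (Jc E) := by
  ext (e|e) (f|f) <;>
    simp [psi, J0, Jc, Matrix.map_apply, apply_ite qS, apply_ite qP,
      apply_ite (star : ℂ → ℂ), qS_one, qS_zero, qP_one, qP_zero]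

lemma det_one_add_psi_J0 (hsym : ∀ p ∈ E, Prod.swap p ∈ E) :
    (1 + t • psi (J0 E)).det =
      (1 - t^2) ^ (E.card - nLoops E) * (1 + t) ^ (2 * nLoops E) := by
  have hb : 1 + t • psi (J0 E) =
      Matrix.fromBlocks (1 + t • Jc E) 0 0 (1 + t • Jc E) := by
    rw [psi_J0_blocks, Matrix.fromBlocks_smul, ← Matrix.fromBlocks_one, Matrix.fromBlocks_add]
    simp
  rw [hb, Matrix.det_fromBlocks_zero₂₁, factor1, Matrix.det_mul, det_dA]
  have := det_one_add_Bt_sq E t hsym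
  have h2 : (1 + t) ^ nLoops E * (1 + t) ^ nLoops E = (1 + t) ^ (2 * nLoops E) := by
    rw [← pow_add, two_mul]
  calc (1 + t) ^ nLoops E * (1 + Bt E t).det * ((1 + t) ^ nLoops E * (1 + Bt E t).det)
      = ((1 + Bt E t).det * (1 + Bt E t).det) *
          ((1 + t) ^ nLoops E * (1 + t) ^ nLoops E) := by ring
    _ = _ := by rw [this, h2]

end DetJ
section Sylvester

lemma sylvester_scaled {α β : Type*} [Fintype α] [Fintype β] [DecidableEq α] [DecidableEq β]
    {u : ℂ} (hu : u ≠ 0) (A : Matrix α β ℂ) (B : Matrix β α ℂ) :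
    (u • 1 + A * B).det * u ^ (Fintype.card β) =
      (u • 1 + B * A).det * u ^ (Fintype.card α) := by
  have h1 : u • ((1 : Matrix α α ℂ) + (u⁻¹ • A) * B) = u • 1 + A * B := by
    rw [smul_add, Matrix.smul_mul, smul_smul, mul_inv_cancel₀ hu, one_smul]
  have h2 : u • ((1 : Matrix β β ℂ) + B * (u⁻¹ • A)) = u • 1 + B * A := by
    rw [smul_add, Matrix.mul_smul, smul_smul, mul_inv_cancel₀ hu, one_smul]
  rw [← h1, ← h2, Matrix.det_smul, Matrix.det_smul,
    Matrix.det_one_add_mul_comm (u⁻¹ • A) B]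
  ring

end Sylvester

section KeyLemma

variable {V : Type*} [Fintype V] [DecidableEq V]

lemma key_generic (E : Finset (V × V)) (hsym : ∀ p ∈ E, Prod.swap p ∈ E)
    (a b : V × V → Quaternion ℝ) (t : ℂ) (hu : (1 : ℂ) - t ^ 2 ≠ 0) :
    Matrix.det (1 - t • psi (Karc E a * (Larc E b)ᴴ - J0 E)) *
        (1 - t ^ 2) ^ (2 * Fintype.card V) =
      (1 - t ^ 2) ^ (E.card - nLoops E) * (1 + t) ^ (2 * nLoops E) *
        Matrix.det (1 - t • psi (Wt E a b) + t ^ 2 • (psi (Dt E a b) - 1)) := by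
  set u : ℂ := 1 - t ^ 2 with hu_def
  set X : Matrix (↥E ⊕ ↥E) (V ⊕ V) ℂ := psi (Karc E a) with hX
  set Lc : Matrix (V ⊕ V) (↥E ⊕ ↥E) ℂ := (psi (Larc E b))ᴴ with hLc
  set Jp : Matrix (↥E ⊕ ↥E) (↥E ⊕ ↥E) ℂ := psi (J0 E) with hJp
  have hpsi_arg : psi (Karc E a * (Larc E b)ᴴ - J0 E) = X * Lc - Jp := by
    rw [psi_sub, psi_mul, psi_conjT]
  have hJp2 : Jp * Jp = 1 := by
    rw [hJp, ← psi_mul, J0_mul_J0 E hsym, psi_one]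
  have hWp : Lc * X = psi (Wt E a b) := by
    rw [hLc, hX, ← psi_conjT, ← psi_mul, LK_eq_Wt]
  have hDp : Lc * (Jp * X) = psi (Dt E a b) := by
    rw [hLc, hX, hJp, ← psi_conjT, ← psi_mul, ← psi_mul, LJK_eq_Dt E a b hsym]
  set Y : Matrix (V ⊕ V) (↥E ⊕ ↥E) ℂ := Lc - t • (Lc * Jp) with hY
  have cardA : Fintype.card (↥E ⊕ ↥E) = 2 * E.card := by
    simp [Fintype.card_sum, two_mul]
  have cardB : Fintype.card (V ⊕ V) = 2 * Fintype.card V := by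
    simp [Fintype.card_sum, two_mul]
  -- Step 1
  have step1 : (1 - t • (X * Lc - Jp)) * (1 - t • Jp) = u • 1 + ((-t) • X) * Y := by
    simp only [hY, Matrix.mul_sub, Matrix.sub_mul, Matrix.add_mul, Matrix.mul_add,
      Matrix.neg_mul, Matrix.mul_neg, Matrix.mul_one, Matrix.one_mul, mul_sub, sub_mul,
      add_mul, mul_add, Matrix.smul_mul, Matrix.mul_smul, smul_smul, mul_one, one_mul,
      smul_sub, sub_smul, one_smul, hJp2, Matrix.mul_assoc, hu_def, sq, neg_smul, neg_mul,
      neg_sub, neg_neg]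
    module
  have step2 : u • (1 : Matrix (V ⊕ V) (V ⊕ V) ℂ) + Y * ((-t) • X) =
      1 - t • psi (Wt E a b) + t ^ 2 • (psi (Dt E a b) - 1) := by
    rw [← hWp, ← hDp]
    simp only [hY, Matrix.mul_sub, Matrix.sub_mul, Matrix.add_mul, Matrix.mul_add,
      Matrix.neg_mul, Matrix.mul_neg, Matrix.mul_one, Matrix.one_mul, Matrix.smul_mul,
      Matrix.mul_smul, sub_mul, mul_sub, smul_sub, smul_smul, sub_smul, one_smul,
      Matrix.mul_assoc, hu_def, sq, neg_smul, neg_mul, neg_sub, neg_neg]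
    module
  have e4 : (1 + t • Jp) * (1 - t • Jp) = u • 1 := by
    simp only [Matrix.mul_sub, Matrix.sub_mul, Matrix.add_mul, Matrix.mul_add,
      Matrix.mul_one, Matrix.one_mul, mul_sub, sub_mul, add_mul, mul_add, Matrix.smul_mul,
      Matrix.mul_smul, smul_smul, mul_one, one_mul, hJp2, hu_def, sq, sub_smul, one_smul]
    module
  have e4det : (1 + t • Jp).det * (1 - t • Jp).det = u ^ (2 * E.card) := by
    rw [← Matrix.det_mul, e4, Matrix.det_smul, Matrix.det_one, mul_one, cardA]
  have e5 : (1 + t • Jp).det = (1 - t ^ 2) ^ (E.card - nLoops E) * (1 + t) ^ (2 * nLoops E) :=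
    det_one_add_psi_J0 E t hsym
  have sylv := sylvester_scaled hu ((-t) • X) Y
  rw [cardA, cardB] at sylv
  have hXYpre : ((-t) • X) * Y = (-t) • (X * Y) := by rw [Matrix.smul_mul]
  -- chain everything
  set d1 : ℂ := (1 - t • psi (Karc E a * (Larc E b)ᴴ - J0 E)).det with hd1
  set R : ℂ := (1 - t • psi (Wt E a b) + t ^ 2 • (psi (Dt E a b) - 1)).det with hR
  have e1 : d1 * (1 - t • Jp).det = (u • 1 + ((-t) • X) * Y).det := by
    rw [hd1, hpsi_arg, ← Matrix.det_mul, step1]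
  have e3 : (u • 1 + Y * ((-t) • X)).det = R := by rw [step2, hR]
  have hup : u ^ (2 * E.card) ≠ 0 := pow_ne_zero _ hu
  apply mul_right_cancel₀ hup
  calc d1 * u ^ (2 * Fintype.card V) * u ^ (2 * E.card)
      = d1 * u ^ (2 * Fintype.card V) * ((1 + t • Jp).det * (1 - t • Jp).det) := by
        rw [e4det]
    _ = (1 + t • Jp).det * ((d1 * (1 - t • Jp).det) * u ^ (2 * Fintype.card V)) := by ring
    _ = (1 + t • Jp).det * ((u • 1 + ((-t) • X) * Y).det * u ^ (2 * Fintype.card V)) := by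
        rw [e1]
    _ = (1 + t • Jp).det * ((u • 1 + Y * ((-t) • X)).det * u ^ (2 * E.card)) := by
        rw [sylv]
    _ = (1 - t ^ 2) ^ (E.card - nLoops E) * (1 + t) ^ (2 * nLoops E) * R * u ^ (2 * E.card) := by
        rw [e3, e5]; ring

end KeyLemma
section PolyExt

open Polynomial

lemma eval_det_lin {ι : Type*} [Fintype ι] [DecidableEq ι] (M : Matrix ι ι ℂ) (s : ℂ) :
    Polynomial.eval s ((1 - (Polynomial.X : ℂ[X]) • M.map Polynomial.C).det) =
      (1 - s • M).det := by
  rw [← Polynomial.coe_evalRingHom, RingHom.map_det]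
  congr 1
  ext i j
  simp [RingHom.mapMatrix_apply, Matrix.map_apply, Matrix.sub_apply, Matrix.smul_apply,
    Matrix.one_apply, smul_eq_mul, Polynomial.coe_evalRingHom, apply_ite (Polynomial.eval s)]
  ring

lemma eval_det_quad {ι : Type*} [Fintype ι] [DecidableEq ι] (M N : Matrix ι ι ℂ) (s : ℂ) :
    Polynomial.eval s ((1 - (Polynomial.X : ℂ[X]) • M.map Polynomial.C +
        (Polynomial.X : ℂ[X]) ^ 2 • (N.map Polynomial.C - 1)).det) =
      (1 - s • M + s ^ 2 • (N - 1)).det := by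
  rw [← Polynomial.coe_evalRingHom, RingHom.map_det]
  congr 1
  ext i j
  simp [RingHom.mapMatrix_apply, Matrix.map_apply, Matrix.sub_apply, Matrix.add_apply,
    Matrix.smul_apply, Matrix.one_apply, smul_eq_mul, Polynomial.coe_evalRingHom, apply_ite (Polynomial.eval s)]
  ring

end PolyExt

/-- Quaternionic determinant formula for the second weighted zeta function, in
cross-multiplied polynomial form: multiplying both sides of
`det(I − tψ(KL*−J₀)) = (1−t²)^{2m₀−2n}(1+t)^{2m₁} det(I − tψ(W̃) + t²(ψ(D̃)−I))`
by `(1−t²)^{2n}` (here `2m₀ = |D(G)| − m₁` is the number of non-loop arcs). -/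
theorem quat_det_formula [Fintype V] [DecidableEq V] (E : Finset (V × V))
    (hsym : ∀ p ∈ E, Prod.swap p ∈ E)
    (hconn : ∀ u v : V, Relation.ReflTransGen (fun x y => (x, y) ∈ E) u v)
    (a b : V × V → Quaternion ℝ) (t : ℂ) :
    Matrix.det (1 - t • psi (Karc E a * (Larc E b)ᴴ - J0 E)) *
        (1 - t ^ 2) ^ (2 * Fintype.card V) =
      (1 - t ^ 2) ^ (E.card - nLoops E) * (1 + t) ^ (2 * nLoops E) *
        Matrix.det (1 - t • psi (Wt E a b) + t ^ 2 • (psi (Dt E a b) - 1)) := by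
  classical
  set A : Matrix (↥E ⊕ ↥E) (↥E ⊕ ↥E) ℂ := psi (Karc E a * (Larc E b)ᴴ - J0 E) with hA
  set W : Matrix (V ⊕ V) (V ⊕ V) ℂ := psi (Wt E a b) with hWs
  set D : Matrix (V ⊕ V) (V ⊕ V) ℂ := psi (Dt E a b) with hDs
  set p : Polynomial ℂ :=
    (1 - (Polynomial.X : Polynomial ℂ) • A.map Polynomial.C).det *
      (1 - (Polynomial.X : Polynomial ℂ) ^ 2) ^ (2 * Fintype.card V) with hp
  set q : Polynomial ℂ :=
    (1 - (Polynomial.X : Polynomial ℂ) ^ 2) ^ (E.card - nLoops E) *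
      (1 + (Polynomial.X : Polynomial ℂ)) ^ (2 * nLoops E) *
      (1 - (Polynomial.X : Polynomial ℂ) • W.map Polynomial.C +
        (Polynomial.X : Polynomial ℂ) ^ 2 • (D.map Polynomial.C - 1)).det with hq
  have heval : ∀ s : ℂ, Polynomial.eval s p =
      (1 - s • A).det * (1 - s ^ 2) ^ (2 * Fintype.card V) := by
    intro s
    rw [hp]
    simp only [Polynomial.eval_mul, Polynomial.eval_pow, Polynomial.eval_sub,
      Polynomial.eval_one, Polynomial.eval_X, eval_det_lin]
  have heval' : ∀ s : ℂ, Polynomial.eval s q =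
      (1 - s ^ 2) ^ (E.card - nLoops E) * (1 + s) ^ (2 * nLoops E) *
        (1 - s • W + s ^ 2 • (D - 1)).det := by
    intro s
    rw [hq]
    simp only [Polynomial.eval_mul, Polynomial.eval_pow, Polynomial.eval_sub,
      Polynomial.eval_add, Polynomial.eval_one, Polynomial.eval_X, eval_det_quad]
  have hpq : p = q := by
    apply Polynomial.eq_of_infinite_eval_eq
    have hsub : {x : ℂ | x ≠ 1 ∧ x ≠ -1} ⊆ {x | Polynomial.eval x p = Polynomial.eval x q} := by
      rintro x ⟨hx1, hx2⟩
      have hu : (1 : ℂ) - x ^ 2 ≠ 0 := by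
        intro h
        have h' : (1 - x) * (1 + x) = 0 := by linear_combination h
        rcases mul_eq_zero.mp h' with h'' | h''
        · exact hx1 (by linear_combination -h'')
        · exact hx2 (by linear_combination h'')
      show Polynomial.eval x p = Polynomial.eval x q
      rw [heval x, heval' x]
      exact key_generic E hsym a b x hu
    have hinf : ({x : ℂ | x ≠ 1 ∧ x ≠ -1}).Infinite := by
      have hfin : ({1, -1} : Set ℂ).Finite := (Set.finite_singleton _).insert _
      have h2 := hfin.infinite_compl
      convert h2 using 1
      ext x
      simp [not_or]
    exact hinf.mono hsub
  have hfin := congrArg (Polynomial.eval t) hpq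
  rw [heval t, heval' t] at hfin
  exact hfin
end
end

section
/- (Eigenvector transfer theorem) Suppose q satisfies the unitarity condition, and let U = K L* − J₀ be the quaternionic Szegedy transition matrix with a(e) = √2 q(e), b(e) = √2 q(e⁻¹). If v ∈ ℍⁿ satisfies W̃ v = v μ for a complex right eigenvalue μ, and λ ∈ ℂ∖{0} satisfies μ = λ + 1/λ, then the vector e = J₀ L v − L v (1/λ) ∈ ℍ^{m'} satisfies U e = e λ. -/
open Quaternion Matrix Finset

noncomputable section

variable {V : Type*}

lemma cq_mul (z w : ℂ) : cq (z * w) = cq z * cq w := by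
  ext <;> simp only [Quaternion.re_mul, Quaternion.imI_mul, Quaternion.imJ_mul,
    Quaternion.imK_mul] <;> simp [cq, Complex.mul_re, Complex.mul_im]

lemma cq_add (z w : ℂ) : cq (z + w) = cq z + cq w := by
  ext <;> simp only [Quaternion.re_add, Quaternion.imI_add, Quaternion.imJ_add,
    Quaternion.imK_add] <;> simp [cq]

lemma cq_one : cq 1 = 1 := by
  ext <;> simp [cq]

lemma mulVec_mulConst {m n : Type*} [Fintype n] (M : Matrix m n (Quaternion ℝ))
    (w : n → Quaternion ℝ) (c : Quaternion ℝ) :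
    M *ᵥ (fun x => w x * c) = fun i => (M *ᵥ w) i * c := by
  funext i
  simp [Matrix.mulVec, dotProduct, Finset.sum_mul, mul_assoc]

lemma coe_mul_eq_smul' (r : ℝ) (x : Quaternion ℝ) : (r : Quaternion ℝ) * x = r • x :=
  (Algebra.smul_def r x).symm

lemma aux_mul1 (x y : Quaternion ℝ) :
    (((Real.sqrt 2 : ℝ) : Quaternion ℝ) * x) * star (((Real.sqrt 2 : ℝ) : Quaternion ℝ) * y)
      = 2 * (x * star y) := by
  rw [coe_mul_eq_smul', coe_mul_eq_smul', Quaternion.star_smul, smul_mul_smul_comm,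
    Real.mul_self_sqrt (by norm_num)]
  rw [Algebra.smul_def]
  rw [map_ofNat]

lemma aux_mul2 (x y : Quaternion ℝ) :
    star (((Real.sqrt 2 : ℝ) : Quaternion ℝ) * x) * (((Real.sqrt 2 : ℝ) : Quaternion ℝ) * y)
      = 2 * (star x * y) := by
  rw [coe_mul_eq_smul', coe_mul_eq_smul', Quaternion.star_smul, smul_mul_smul_comm,
    Real.mul_self_sqrt (by norm_num)]
  rw [Algebra.smul_def]
  rw [map_ofNat]
section lemmas
variable [Fintype V] [DecidableEq V]

lemma hJL (E : Finset (V × V)) (q b : V × V → Quaternion ℝ)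
    (hsym : ∀ p ∈ E, Prod.swap p ∈ E)
    (hb : b = fun p => ((Real.sqrt 2 : ℝ) : Quaternion ℝ) * q (Prod.swap p)) :
    J0 E * Larc E b = Karc E (fun p => ((Real.sqrt 2 : ℝ) : Quaternion ℝ) * q p) := by
  refine Matrix.ext fun e w => ?_
  simp only [Matrix.mul_apply, J0, Larc, Karc, Matrix.of_apply, ite_mul, one_mul, zero_mul]
  rw [Finset.sum_coe_sort E (fun p => if p = Prod.swap (e : V × V) then
    (if p.2 = w then b p else 0) else 0), Finset.sum_ite_eq' E, if_pos (hsym _ e.2)]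
  simp [hb]

lemma hJK (E : Finset (V × V)) (q b : V × V → Quaternion ℝ)
    (hsym : ∀ p ∈ E, Prod.swap p ∈ E)
    (hb : b = fun p => ((Real.sqrt 2 : ℝ) : Quaternion ℝ) * q (Prod.swap p)) :
    J0 E * Karc E (fun p => ((Real.sqrt 2 : ℝ) : Quaternion ℝ) * q p) = Larc E b := by
  refine Matrix.ext fun e w => ?_
  simp only [Matrix.mul_apply, J0, Larc, Karc, Matrix.of_apply, ite_mul, one_mul, zero_mul]
  rw [Finset.sum_coe_sort E (fun p => if p = Prod.swap (e : V × V) then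
    (if p.1 = w then ((Real.sqrt 2 : ℝ) : Quaternion ℝ) * q p else 0) else 0),
    Finset.sum_ite_eq' E, if_pos (hsym _ e.2)]
  simp [hb]

lemma hU (E : Finset (V × V)) (q b : V × V → Quaternion ℝ)
    (hb : b = fun p => ((Real.sqrt 2 : ℝ) : Quaternion ℝ) * q (Prod.swap p)) :
    SzeU E q = Karc E (fun p => ((Real.sqrt 2 : ℝ) : Quaternion ℝ) * q p)
      * (Larc E b)ᴴ - J0 E := by
  refine Matrix.ext fun e f => ?_
  simp only [Matrix.sub_apply, Matrix.mul_apply, Matrix.conjTranspose_apply, Karc, Larc, J0,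
    SzeU, Matrix.of_apply, ite_mul, zero_mul]
  rw [Finset.sum_ite_eq, if_pos (Finset.mem_univ _)]
  by_cases hfe : (f : V × V) = Prod.swap (e : V × V)
  · have h2 : (f : V × V).2 = (e : V × V).1 := by rw [hfe]; rfl
    rw [if_pos hfe, if_pos hfe, if_pos h2, hb]
    simp only [hfe, Prod.swap_swap]
    rw [aux_mul1]
  · rw [if_neg hfe, if_neg hfe]
    by_cases h2 : (f : V × V).2 = (e : V × V).1
    · rw [if_pos h2, if_pos h2, hb]
      simp only
      rw [aux_mul1, sub_zero]
    · rw [if_neg h2, if_neg h2, star_zero, mul_zero, sub_zero]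

lemma hLK (E : Finset (V × V)) (q b : V × V → Quaternion ℝ)
    (hb : b = fun p => ((Real.sqrt 2 : ℝ) : Quaternion ℝ) * q (Prod.swap p)) :
    (Larc E b)ᴴ * Karc E (fun p => ((Real.sqrt 2 : ℝ) : Quaternion ℝ) * q p)
      = Wtil E q := by
  refine Matrix.ext fun u w => ?_
  simp only [Matrix.mul_apply, Matrix.conjTranspose_apply, Karc, Larc, Wtil, Matrix.of_apply]
  rw [Finset.sum_coe_sort E (fun p => star (if p.2 = u then b p else 0) *
    (if p.1 = w then ((Real.sqrt 2 : ℝ) : Quaternion ℝ) * q p else 0))]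
  have : ∀ p ∈ E, (star (if p.2 = u then b p else 0) *
      (if p.1 = w then ((Real.sqrt 2 : ℝ) : Quaternion ℝ) * q p else 0)) =
      (if p = (w, u) then star (b (w, u)) *
        (((Real.sqrt 2 : ℝ) : Quaternion ℝ) * q (w, u)) else 0) := by
    rintro ⟨x, y⟩ _
    by_cases h1 : y = u <;> by_cases h2 : x = w <;>
      simp [h1, h2, Prod.ext_iff]
  rw [Finset.sum_congr rfl this, Finset.sum_ite_eq' E]
  split_ifs with h
  · rw [hb]
    simp only [Prod.swap]
    rw [aux_mul2]
  · rfl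

lemma hLL (E : Finset (V × V)) (q b : V × V → Quaternion ℝ)
    (hsym : ∀ p ∈ E, Prod.swap p ∈ E)
    (hu : ∀ u : V, ∑ e ∈ E.filter (fun p => p.1 = u), Quaternion.normSq (q e) = 1)
    (hb : b = fun p => ((Real.sqrt 2 : ℝ) : Quaternion ℝ) * q (Prod.swap p)) :
    (Larc E b)ᴴ * Larc E b = Matrix.diagonal (fun _ => (2 : Quaternion ℝ)) := by
  refine Matrix.ext fun u w => ?_
  simp only [Matrix.mul_apply, Matrix.conjTranspose_apply, Larc, Matrix.of_apply]
  rw [Finset.sum_coe_sort E (fun p => star (if p.2 = u then b p else 0) *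
    (if p.2 = w then b p else 0))]
  by_cases huw : u = w
  · subst huw
    rw [Matrix.diagonal_apply_eq]
    have step1 : ∀ p ∈ E, (star (if p.2 = u then b p else 0) * (if p.2 = u then b p else 0))
        = (if p.2 = u then ((Quaternion.normSq (b p) : ℝ) : Quaternion ℝ) else 0) := by
      intro p _
      by_cases h : p.2 = u
      · rw [if_pos h, Quaternion.star_mul_self, if_pos h]
      · rw [if_neg h, star_zero, mul_zero, if_neg h]
    rw [Finset.sum_congr rfl step1, ← Finset.sum_filter]
    have step2 : ∑ p ∈ E.filter (fun p => p.2 = u),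
        ((Quaternion.normSq (b p) : ℝ) : Quaternion ℝ)
        = ∑ p ∈ E.filter (fun p => p.1 = u),
        ((Quaternion.normSq (b (Prod.swap p)) : ℝ) : Quaternion ℝ) := by
      refine Finset.sum_nbij' Prod.swap Prod.swap ?_ ?_ ?_ ?_ ?_
      · intro p hp
        simp only [Finset.mem_filter] at hp ⊢
        exact ⟨hsym _ hp.1, hp.2⟩
      · intro p hp
        simp only [Finset.mem_filter] at hp ⊢
        exact ⟨hsym _ hp.1, hp.2⟩
      · intro p _; exact Prod.swap_swap p
      · intro p _; exact Prod.swap_swap p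
      · intro p _; rw [Prod.swap_swap]
    rw [step2]
    have step3 : ∀ p ∈ E.filter (fun p => p.1 = u),
        ((Quaternion.normSq (b (Prod.swap p)) : ℝ) : Quaternion ℝ)
        = (((2 * Quaternion.normSq (q p) : ℝ)) : Quaternion ℝ) := by
      intro p _
      rw [hb]
      simp only [Prod.swap_swap]
      congr 1
      rw [_root_.map_mul, Quaternion.normSq_coe, Real.sq_sqrt (by norm_num)]
    rw [Finset.sum_congr rfl step3]
    have : ∑ p ∈ E.filter (fun p => p.1 = u),
        (((2 * Quaternion.normSq (q p) : ℝ)) : Quaternion ℝ)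
        = (((∑ p ∈ E.filter (fun p => p.1 = u), 2 * Quaternion.normSq (q p) : ℝ)) :
          Quaternion ℝ) := by
      exact (map_sum (algebraMap ℝ (Quaternion ℝ)) _ _).symm
    rw [this, ← Finset.mul_sum, hu u, mul_one]
    norm_cast
  · rw [Matrix.diagonal_apply_ne _ huw]
    refine Finset.sum_eq_zero fun p _ => ?_
    by_cases h : p.2 = u
    · rw [if_pos h, if_neg (h ▸ huw), mul_zero]
    · rw [if_neg h, star_zero, zero_mul]

end lemmas

theorem szegedy_eigenvector_transfer [Fintype V] [DecidableEq V] (E : Finset (V × V))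
    (hsym : ∀ p ∈ E, Prod.swap p ∈ E)
    (hconn : ∀ u v : V, Relation.ReflTransGen (fun x y => (x, y) ∈ E) u v)
    (q : V × V → Quaternion ℝ) (hq : ∀ p ∈ E, q p ≠ 0)
    (hu : ∀ u : V, ∑ e ∈ E.filter (fun p => p.1 = u), Quaternion.normSq (q e) = 1)
    (b : V × V → Quaternion ℝ)
    (hb : b = fun p => ((Real.sqrt 2 : ℝ) : Quaternion ℝ) * q (Prod.swap p))
    (v : V → Quaternion ℝ) (μ l : ℂ) (hl : l ≠ 0) (hμ : μ = l + 1 / l)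
    (hv : (Wtil E q).mulVec v = fun u => v u * cq μ) :
    (SzeU E q).mulVec
        (fun x => (J0 E * Larc E b).mulVec v x - (Larc E b).mulVec v x * cq (1 / l)) =
      fun x =>
        ((J0 E * Larc E b).mulVec v x - (Larc E b).mulVec v x * cq (1 / l)) * cq l
     := by
  have HJL := hJL E q b hsym hb
  have HJK := hJK E q b hsym hb
  have HU := hU E q b hb
  have HLK := hLK E q b hb
  have HLL := hLL E q b hsym hu hb
  rw [HJL, HU]
  have hw : (fun x => (Karc E (fun p => ((Real.sqrt 2 : ℝ) : Quaternion ℝ) * q p) *ᵥ v) x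
        - (Larc E b *ᵥ v) x * cq (1 / l))
      = (Karc E (fun p => ((Real.sqrt 2 : ℝ) : Quaternion ℝ) * q p) *ᵥ v)
        - (fun x => (Larc E b *ᵥ v) x * cq (1 / l)) := rfl
  rw [hw, Matrix.sub_mulVec, Matrix.mulVec_sub, Matrix.mulVec_sub]
  have p1 : (Karc E (fun p => ((Real.sqrt 2 : ℝ) : Quaternion ℝ) * q p) * (Larc E b)ᴴ) *ᵥ
      (Karc E (fun p => ((Real.sqrt 2 : ℝ) : Quaternion ℝ) * q p) *ᵥ v)
      = fun x => (Karc E (fun p => ((Real.sqrt 2 : ℝ) : Quaternion ℝ) * q p) *ᵥ v) x * cq μ := by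
    rw [← Matrix.mulVec_mulVec, Matrix.mulVec_mulVec v ((Larc E b)ᴴ), HLK, hv, mulVec_mulConst]
  have p2 : (Karc E (fun p => ((Real.sqrt 2 : ℝ) : Quaternion ℝ) * q p) * (Larc E b)ᴴ) *ᵥ
      (fun x => (Larc E b *ᵥ v) x * cq (1 / l))
      = fun x => (Karc E (fun p => ((Real.sqrt 2 : ℝ) : Quaternion ℝ) * q p) *ᵥ v) x * 2
          * cq (1 / l) := by
    rw [mulVec_mulConst, ← Matrix.mulVec_mulVec, Matrix.mulVec_mulVec v ((Larc E b)ᴴ), HLL]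
    have hd : Matrix.diagonal (fun _ => (2 : Quaternion ℝ)) *ᵥ v = fun u => v u * 2 := by
      funext u
      rw [Matrix.mulVec_diagonal, two_mul, ← mul_two]
    rw [hd, mulVec_mulConst]
  have p3 : J0 E *ᵥ (Karc E (fun p => ((Real.sqrt 2 : ℝ) : Quaternion ℝ) * q p) *ᵥ v)
      = Larc E b *ᵥ v := by
    rw [Matrix.mulVec_mulVec, HJK]
  have p4 : J0 E *ᵥ (fun x => (Larc E b *ᵥ v) x * cq (1 / l))
      = fun x => (Karc E (fun p => ((Real.sqrt 2 : ℝ) : Quaternion ℝ) * q p) *ᵥ v) x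
          * cq (1 / l) := by
    rw [mulVec_mulConst, Matrix.mulVec_mulVec, HJL]
  rw [p1, p2, p3, p4]
  funext x
  simp only [Pi.sub_apply]
  have hs1 : cq μ = cq l + cq (1 / l) := by rw [hμ, cq_add]
  have hs2 : cq (1 / l) * cq l = 1 := by
    rw [← cq_mul, one_div, inv_mul_cancel₀ hl, cq_one]
  rw [hs1, sub_mul, mul_assoc ((Larc E b *ᵥ v) x) (cq (1 / l)) (cq l), hs2, mul_one]
  noncomm_ring
end
end
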